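/- Let 0 ≤ c₃ < c₁ and 0 ≤ c₄ < c₂, let f : [c₄,∞) → [0,∞) and g : [c₃,∞) → [0,∞) be continuous, nondecreasing, strictly positive on (c₄,∞) and (c₃,∞) respectively, with ∫_{c₄}^{∞} f(s) ds = ∫_{c₃}^{∞} g(θ) dθ = ∞. Set F(z) = ∫_{c₄}^{z} f(s) ds and G(w) = ∫_{c₃}^{w} g(θ) dθ, with inverse function F⁻¹ of F. Let 0 < ε < 1 < K with ε·G(c₁) ≤ F(c₂) ≤ K·G(c₁), and suppose I := ∫_{c₁}^{∞} ds / f(F⁻¹(ε·G(s))) < ∞. Then there is no global solution: if w, z : [0,T) → ℝ are differentiable with w(0) = c₁, z(0) = c₂, w ≥ c₃, z ≥ c₄, and w' = f(z), z' = g(w) on [0,T), then necessarily T ≤ I. -/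

import Mathlib

open Set MeasureTheory Filter

/-- Theorem A′, part 1 (blowup case) of the paper: if
`I = ∫_{c₁}^∞ ds / f(F⁻¹(ε G(s))) < ∞`, then any solution of `w' = f(z)`, `z' = g(w)`
on `[0,T)` satisfies `T ≤ I`; in particular there is no global solution. -/
theorem blowup_thmAprime
    (c₁ c₂ c₃ c₄ ε K T : ℝ)
    (hc₃ : 0 ≤ c₃) (hc₃₁ : c₃ < c₁) (hc₄ : 0 ≤ c₄) (hc₄₂ : c₄ < c₂)
    (f g : ℝ → ℝ)
    (hf_cont : ContinuousOn f (Ici c₄)) (hg_cont : ContinuousOn g (Ici c₃))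
    (hf_nonneg : ∀ s ∈ Ici c₄, 0 ≤ f s) (hg_nonneg : ∀ s ∈ Ici c₃, 0 ≤ g s)
    (hf_mono : MonotoneOn f (Ici c₄)) (hg_mono : MonotoneOn g (Ici c₃))
    (hf_pos : ∀ s ∈ Ioi c₄, 0 < f s) (hg_pos : ∀ s ∈ Ioi c₃, 0 < g s)
    (hf_div : ¬ IntegrableOn f (Ici c₄)) (hg_div : ¬ IntegrableOn g (Ici c₃))
    (F G Finv : ℝ → ℝ)
    (hF : ∀ x, F x = ∫ s in c₄..x, f s) (hG : ∀ x, G x = ∫ θ in c₃..x, g θ)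
    (hFinv_mem : ∀ y ∈ Ici (0 : ℝ), Finv y ∈ Ici c₄)
    (hFinv_right : ∀ y ∈ Ici (0 : ℝ), F (Finv y) = y)
    (hFinv_left : ∀ x ∈ Ici c₄, Finv (F x) = x)
    (hε : 0 < ε) (hε1 : ε < 1) (hK : 1 < K)
    (hFG1 : ε * G c₁ ≤ F c₂) (hFG2 : F c₂ ≤ K * G c₁)
    (hI : IntegrableOn (fun s => 1 / f (Finv (ε * G s))) (Ici c₁))
    (w z : ℝ → ℝ)
    (hw0 : w 0 = c₁) (hz0 : z 0 = c₂)
    (hw_ge : ∀ t ∈ Ico (0 : ℝ) T, c₃ ≤ w t)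
    (hz_ge : ∀ t ∈ Ico (0 : ℝ) T, c₄ ≤ z t)
    (hw' : ∀ t ∈ Ico (0 : ℝ) T, HasDerivAt w (f (z t)) t)
    (hz' : ∀ t ∈ Ico (0 : ℝ) T, HasDerivAt z (g (w t)) t) :
    T ≤ ∫ s in Ici c₁, 1 / f (Finv (ε * G s)) := by
  set φ : ℝ → ℝ := fun s => 1 / f (Finv (ε * G s)) with hφ
  -- basic interval integrability of f and g
  have huIcc : ∀ a b : ℝ, ∀ c : ℝ, c ≤ a → c ≤ b → uIcc a b ⊆ Ici c := by
    intro a b c ha hb x hx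
    exact le_trans (le_min ha hb) hx.1
  have hfi : ∀ a b, c₄ ≤ a → c₄ ≤ b → IntervalIntegrable f volume a b := fun a b ha hb =>
    (hf_cont.mono (huIcc a b c₄ ha hb)).intervalIntegrable
  have hgi : ∀ a b, c₃ ≤ a → c₃ ≤ b → IntervalIntegrable g volume a b := fun a b ha hb =>
    (hg_cont.mono (huIcc a b c₃ ha hb)).intervalIntegrable
  -- nonnegativity of G, F
  have hGnonneg : ∀ x, c₃ ≤ x → 0 ≤ G x := by
    intro x hx
    rw [hG]
    exact intervalIntegral.integral_nonneg hx (fun u hu => hg_nonneg u hu.1)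
  have hFnonneg : ∀ x, c₄ ≤ x → 0 ≤ F x := by
    intro x hx
    rw [hF]
    exact intervalIntegral.integral_nonneg hx (fun u hu => hf_nonneg u hu.1)
  have hF0 : F c₄ = 0 := by rw [hF]; simp
  -- the integrand φ is nonnegative on [c₁, ∞)
  have hφnonneg : ∀ s ∈ Ici c₁, 0 ≤ φ s := by
    intro s hs
    have h1 : c₃ ≤ s := le_trans hc₃₁.le hs
    have h2 : (0:ℝ) ≤ ε * G s := mul_nonneg hε.le (hGnonneg s h1)
    exact one_div_nonneg.mpr (hf_nonneg _ (hFinv_mem _ h2))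
  have hInonneg : 0 ≤ ∫ s in Ici c₁, φ s :=
    setIntegral_nonneg measurableSet_Ici hφnonneg
  rcases le_or_gt T 0 with hT | hT
  · exact hT.trans hInonneg
  -- From now on, 0 < T.
  -- strict monotonicity of F on [c₄, ∞)
  have hFsm : StrictMonoOn F (Ici c₄) := by
    intro a ha b hb hab
    have h1 := intervalIntegral.integral_add_adjacent_intervals
      (hfi c₄ a le_rfl ha) (hfi a b ha (ha.trans hab.le))
    have h2 : 0 < ∫ x in a..b, f x :=
      intervalIntegral.intervalIntegral_pos_of_pos_on (hfi a b ha (ha.trans hab.le))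
        (fun x hx => hf_pos x (lt_of_le_of_lt ha hx.1)) hab
    have hFa : F a = ∫ s in c₄..a, f s := hF a
    have hFb : F b = ∫ s in c₄..b, f s := hF b
    linarith
  have hFmono : MonotoneOn F (Ici c₄) := hFsm.monotoneOn
  -- Finv is strictly monotone on [0, ∞)
  have hFinv_sm : StrictMonoOn Finv (Ici (0:ℝ)) := by
    intro y₁ h1 y₂ h2 hlt
    by_contra hcon
    push_neg at hcon
    have := hFmono (hFinv_mem _ h2) (hFinv_mem _ h1) hcon
    rw [hFinv_right _ h1, hFinv_right _ h2] at this
    exact absurd hlt (not_lt.mpr this)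
  -- Finv y > c₄ when y > 0
  have hFinv_gt : ∀ y : ℝ, 0 < y → c₄ < Finv y := by
    intro y hy
    rcases eq_or_lt_of_le (Set.mem_Ici.mp (hFinv_mem y hy.le)) with h | h
    · exfalso
      have := hFinv_right y hy.le
      rw [← h, hF0] at this
      exact absurd this.symm (ne_of_gt hy)
    · exact h
  -- Finv is continuous at every y > 0
  have hFinv_contAt : ∀ y : ℝ, 0 < y → ContinuousAt Finv y := by
    intro y hy
    refine hFinv_sm.continuousAt_of_image_mem_nhds (Ici_mem_nhds hy) ?_
    refine mem_of_superset (Ici_mem_nhds (hFinv_gt y hy)) ?_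
    intro x hx
    exact ⟨F x, hFnonneg x hx, hFinv_left x hx⟩
  -- continuity / measurability of f and g at interior points
  have hf_contAt : ∀ x, c₄ < x → ContinuousAt f x := fun x hx =>
    (hf_cont x hx.le).continuousAt (Ici_mem_nhds hx)
  have hg_contAt : ∀ x, c₃ < x → ContinuousAt g x := fun x hx =>
    (hg_cont x hx.le).continuousAt (Ici_mem_nhds hx)
  -- derivative of F and G at interior points
  have hF' : ∀ x, c₄ < x → HasDerivAt F (f x) x := by
    intro x hx
    have h := intervalIntegral.integral_hasDerivAt_right (hfi c₄ x le_rfl hx.le)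
      (ContinuousAt.stronglyMeasurableAtFilter isOpen_Ioi
        (fun u hu => hf_contAt u hu) x hx)
      (hf_contAt x hx)
    have : F = fun u => ∫ s in c₄..u, f s := funext hF
    rw [this]
    exact h
  have hG' : ∀ x, c₃ < x → HasDerivAt G (g x) x := by
    intro x hx
    have h := intervalIntegral.integral_hasDerivAt_right (hgi c₃ x le_rfl hx.le)
      (ContinuousAt.stronglyMeasurableAtFilter isOpen_Ioi
        (fun u hu => hg_contAt u hu) x hx)
      (hg_contAt x hx)
    have : G = fun u => ∫ s in c₃..u, g s := funext hG
    rw [this]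
    exact h
  -- G is monotone on [c₃,∞)
  have hGmono : MonotoneOn G (Ici c₃) := by
    intro a ha b hb hab
    have h1 := intervalIntegral.integral_add_adjacent_intervals
      (hgi c₃ a le_rfl ha) (hgi a b ha (ha.trans hab))
    have h2 : 0 ≤ ∫ x in a..b, g x :=
      intervalIntegral.integral_nonneg hab
        (fun u hu => hg_nonneg u (ha.trans hu.1))
    have hGa : G a = ∫ s in c₃..a, g s := hG a
    have hGb : G b = ∫ s in c₃..b, g s := hG b
    linarith
  have hGc₁ : 0 < G c₁ := by
    rw [hG]
    exact intervalIntegral.intervalIntegral_pos_of_pos_on (hgi c₃ c₁ le_rfl hc₃₁.le)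
      (fun x hx => hg_pos x hx.1) hc₃₁
  -- monotonicity of w and z on [0,T)
  have hIcoT : 0 ∈ Ico (0:ℝ) T := ⟨le_rfl, hT⟩
  have hwc : ContinuousOn w (Ico 0 T) := fun t ht =>
    ((hw' t ht).continuousAt).continuousWithinAt
  have hzc : ContinuousOn z (Ico 0 T) := fun t ht =>
    ((hz' t ht).continuousAt).continuousWithinAt
  have hintIco : interior (Ico (0:ℝ) T) = Ioo 0 T := interior_Ico
  have hwmono : MonotoneOn w (Ico 0 T) := by
    apply monotoneOn_of_deriv_nonneg (convex_Ico 0 T) hwc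
    · rw [hintIco]
      intro x hx
      exact ((hw' x (Ioo_subset_Ico_self hx)).differentiableAt).differentiableWithinAt
    · rw [hintIco]
      intro x hx
      rw [(hw' x (Ioo_subset_Ico_self hx)).deriv]
      exact hf_nonneg _ (hz_ge x (Ioo_subset_Ico_self hx))
  have hzmono : MonotoneOn z (Ico 0 T) := by
    apply monotoneOn_of_deriv_nonneg (convex_Ico 0 T) hzc
    · rw [hintIco]
      intro x hx
      exact ((hz' x (Ioo_subset_Ico_self hx)).differentiableAt).differentiableWithinAt
    · rw [hintIco]
      intro x hx
      rw [(hz' x (Ioo_subset_Ico_self hx)).deriv]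
      exact hg_nonneg _ (hw_ge x (Ioo_subset_Ico_self hx))
  have hw_ge₁ : ∀ t ∈ Ico (0:ℝ) T, c₁ ≤ w t := by
    intro t ht
    have := hwmono hIcoT ht ht.1
    rwa [hw0] at this
  have hz_ge₂ : ∀ t ∈ Ico (0:ℝ) T, c₂ ≤ z t := by
    intro t ht
    have := hzmono hIcoT ht ht.1
    rwa [hz0] at this
  -- the comparison function H = F∘z - ε G∘w is nondecreasing and nonnegative
  have hHd : ∀ t ∈ Ico (0:ℝ) T,
      HasDerivAt (fun τ => F (z τ) - ε * G (w τ))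
        (f (z t) * g (w t) - ε * (g (w t) * f (z t))) t := by
    intro t ht
    have h1 : HasDerivAt (fun τ => F (z τ)) (f (z t) * g (w t)) t :=
      (hF' (z t) (lt_of_lt_of_le hc₄₂ (hz_ge₂ t ht))).comp t (hz' t ht)
    have h2 : HasDerivAt (fun τ => G (w τ)) (g (w t) * f (z t)) t :=
      (hG' (w t) (lt_of_lt_of_le hc₃₁ (hw_ge₁ t ht))).comp t (hw' t ht)
    exact h1.sub ((h2.const_mul ε))
  have hHmono : MonotoneOn (fun τ => F (z τ) - ε * G (w τ)) (Ico 0 T) := by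
    apply monotoneOn_of_deriv_nonneg (convex_Ico 0 T)
    · intro t ht
      exact ((hHd t ht).continuousAt).continuousWithinAt
    · rw [hintIco]
      intro x hx
      exact ((hHd x (Ioo_subset_Ico_self hx)).differentiableAt).differentiableWithinAt
    · rw [hintIco]
      intro x hx
      rw [(hHd x (Ioo_subset_Ico_self hx)).deriv]
      have h1 : 0 ≤ f (z x) := hf_nonneg _ (hz_ge x (Ioo_subset_Ico_self hx))
      have h2 : 0 ≤ g (w x) := hg_nonneg _ (hw_ge x (Ioo_subset_Ico_self hx))
      have h3 := mul_nonneg (mul_nonneg (by linarith : (0:ℝ) ≤ 1 - ε) h2) h1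
      nlinarith [h3]
  have hH : ∀ t ∈ Ico (0:ℝ) T, ε * G (w t) ≤ F (z t) := by
    intro t ht
    have h := hHmono hIcoT ht ht.1
    simp only [hz0, hw0] at h
    linarith
  -- key pointwise inequality
  have hkey : ∀ t ∈ Ico (0:ℝ) T, f (Finv (ε * G (w t))) ≤ f (z t) := by
    intro t ht
    have hGw : 0 ≤ ε * G (w t) := mul_nonneg hε.le (hGnonneg _ (hw_ge t ht))
    have h1 : F (Finv (ε * G (w t))) ≤ F (z t) := by
      rw [hFinv_right _ hGw]; exact hH t ht
    have h2 : Finv (ε * G (w t)) ≤ z t := by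
      by_contra hcon
      push_neg at hcon
      exact absurd (hFsm (hz_ge t ht) (hFinv_mem _ hGw) hcon) (not_lt.mpr h1)
    exact hf_mono (hFinv_mem _ hGw) (hz_ge t ht) h2
  -- properties of φ on [c₁, ∞)
  have hφc : ∀ s ∈ Ici c₁, ContinuousAt φ s := by
    intro s hs
    have hGs : G c₁ ≤ G s := hGmono hc₃₁.le (hc₃₁.le.trans hs) hs
    have hεGs : 0 < ε * G s := mul_pos hε (lt_of_lt_of_le hGc₁ hGs)
    have hGc : ContinuousAt G s := (hG' s (lt_of_lt_of_le hc₃₁ hs)).continuousAt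
    have h1 : ContinuousAt (fun u => ε * G u) s := hGc.const_mul ε
    have h2 : ContinuousAt Finv (ε * G s) := hFinv_contAt _ hεGs
    have h3 : ContinuousAt f (Finv (ε * G s)) := hf_contAt _ (hFinv_gt _ hεGs)
    have h24 : ContinuousAt (fun u => Finv (ε * G u)) s :=
      ContinuousAt.comp (g := Finv) (f := fun u => ε * G u) h2 h1
    have h4 : ContinuousAt (fun u => f (Finv (ε * G u))) s :=
      ContinuousAt.comp (g := f) (f := fun u => Finv (ε * G u)) h3 h24
    have h5 : f (Finv (ε * G s)) ≠ 0 :=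
      ne_of_gt (hf_pos _ (hFinv_gt _ hεGs))
    exact continuousAt_const.div h4 h5
  have hφpos : ∀ s ∈ Ici c₁, 0 < f (Finv (ε * G s)) := by
    intro s hs
    have hGs : G c₁ ≤ G s := hGmono hc₃₁.le (hc₃₁.le.trans hs) hs
    have hεGs : 0 < ε * G s := mul_pos hε (lt_of_lt_of_le hGc₁ hGs)
    exact hf_pos _ (hFinv_gt _ hεGs)
  -- Main estimate: every t ∈ [0, T) satisfies t ≤ I
  have hmain : ∀ t ∈ Ico (0:ℝ) T, t ≤ ∫ s in Ici c₁, φ s := by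
    intro t ht
    have hIcc : Icc (0:ℝ) t ⊆ Ico 0 T := fun x hx => ⟨hx.1, lt_of_le_of_lt hx.2 ht.2⟩
    have huIcc0t : uIcc (0:ℝ) t = Icc 0 t := uIcc_of_le ht.1
    -- w maps [0,t] into [c₁, w t] ⊆ Ici c₁
    have hwmaps : ∀ x ∈ Icc (0:ℝ) t, w x ∈ Ici c₁ := fun x hx => hw_ge₁ x (hIcc hx)
    -- continuity of the integrand τ ↦ f (z τ) on [0, t]
    have hfzc : ContinuousOn (fun τ => f (z τ)) (Icc 0 t) := by
      intro x hx
      have h1 : ContinuousAt z x := (hz' x (hIcc hx)).continuousAt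
      have h2 : ContinuousAt f (z x) :=
        hf_contAt _ (lt_of_lt_of_le hc₄₂ (hz_ge₂ x (hIcc hx)))
      exact (h2.comp h1).continuousWithinAt
    -- change of variables
    have hd1 : ∀ x ∈ uIcc (0:ℝ) t, HasDerivAt w (f (z x)) x := by
      intro x hx
      rw [huIcc0t] at hx
      exact hw' x (hIcc hx)
    have hd2 : ContinuousOn (fun τ => f (z τ)) (uIcc (0:ℝ) t) := by
      rw [huIcc0t]; exact hfzc
    have hd3 : ContinuousOn φ (w '' uIcc (0:ℝ) t) := by
      rw [huIcc0t]
      intro s hs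
      obtain ⟨x, hx, rfl⟩ := hs
      exact (hφc _ (hwmaps x hx)).continuousWithinAt
    have hsub := intervalIntegral.integral_comp_smul_deriv' (f := w)
      (f' := fun τ => f (z τ)) (g := φ) (a := (0:ℝ)) (b := t) hd1 hd2 hd3
    simp only [Function.comp_apply] at hsub
    -- lower bound: t ≤ ∫ τ in 0..t, f (z τ) • φ (w τ)
    have hlow : t ≤ ∫ τ in (0:ℝ)..t, f (z τ) • φ (w τ) := by
      have hone : (∫ τ in (0:ℝ)..t, (1:ℝ)) = t := by simp
      have hmono' : (∫ τ in (0:ℝ)..t, (1:ℝ)) ≤ ∫ τ in (0:ℝ)..t, f (z τ) • φ (w τ) := by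
        apply intervalIntegral.integral_mono_on ht.1
        · exact intervalIntegrable_const
        · apply ContinuousOn.intervalIntegrable
          rw [huIcc0t]
          apply hfzc.smul
          intro x hx
          exact (hφc _ (hwmaps x hx)).continuousWithinAt.comp
            ((hw' x (hIcc hx)).continuousAt).continuousWithinAt (fun u hu => hwmaps u hu)
        · intro x hx
          have hφw : 0 < f (Finv (ε * G (w x))) := hφpos _ (hwmaps x hx)
          have hk := hkey x (hIcc hx)
          have : (1:ℝ) ≤ f (z x) / f (Finv (ε * G (w x))) :=
            (one_le_div hφw).mpr hk
          simpa [hφ, smul_eq_mul, mul_one_div, div_eq_mul_inv] using this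
      linarith
    -- upper bound: ∫ s in c₁..w t, φ s ≤ I
    have hup : (∫ s in (w 0)..(w t), φ s) ≤ ∫ s in Ici c₁, φ s := by
      rw [hw0]
      have hwt : c₁ ≤ w t := hw_ge₁ t ht
      rw [intervalIntegral.integral_of_le hwt]
      apply setIntegral_mono_set hI
      · exact (ae_restrict_iff' measurableSet_Ici).mpr (ae_of_all _ hφnonneg)
      · exact HasSubset.Subset.eventuallyLE (fun x hx => le_of_lt hx.1)
    calc t ≤ ∫ τ in (0:ℝ)..t, f (z τ) • φ (w τ) := hlow
      _ = ∫ s in (w 0)..(w t), φ s := hsub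
      _ ≤ ∫ s in Ici c₁, φ s := hup
  -- conclude
  by_contra hcon
  push_neg at hcon
  set I := ∫ s in Ici c₁, φ s
  have h1 : (I + T) / 2 ∈ Ico (0:ℝ) T :=
    ⟨by positivity, by linarith⟩
  have := hmain _ h1
  linarith
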